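/- arXiv:0704.1466 — 3 statements merged into one kernel-verified Lean document; each statement's English description precedes it below -/
import Mathlib

section
/- Let θ̂_n be any sequence of estimators in the Gaussian location model (sample of size n from N(θ,1), θ ∈ ℝ) such that P_{n,θ}(θ̂_n = 0) → 1 whenever θ = 0. Then for every s ∈ ℝ, the risk E_{n,θ_n}[n(θ̂_n − θ_n)²] evaluated at the local parameter θ_n = −s/√n satisfies liminf_{n→∞} E_{n,θ_n}[n(θ̂_n − θ_n)²] ≥ s². -/
open MeasureTheory ProbabilityTheory Filter Topology Real
open scoped ENNReal NNReal

noncomputable def gden (θ : ℝ) (x : ℝ) : ℝ≥0∞ :=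
  ENNReal.ofReal (Real.exp (θ * x - θ ^ 2 / 2))

lemma gden_measurable (θ : ℝ) : Measurable (gden θ) :=
  ENNReal.measurable_ofReal.comp (((measurable_id.const_mul θ).sub_const _).exp)

lemma withDensity_gden (θ : ℝ) :
    (gaussianReal 0 1).withDensity (gden θ) = gaussianReal θ 1 := by
  rw [gaussianReal_of_var_ne_zero 0 one_ne_zero, gaussianReal_of_var_ne_zero θ one_ne_zero,
    ← withDensity_mul _ (measurable_gaussianPDF 0 1) (gden_measurable θ)]
  congr 1
  funext x
  simp only [Pi.mul_apply, gaussianPDF, gden,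
    ← ENNReal.ofReal_mul (gaussianPDFReal_nonneg 0 1 x)]
  congr 1
  simp only [gaussianPDFReal, NNReal.coe_one]
  rw [mul_assoc, ← Real.exp_add]
  congr 1
  ring_nf

lemma lintegral_gden_sq (θ : ℝ) :
    ∫⁻ x, gden θ x * gden θ x ∂gaussianReal 0 1 = ENNReal.ofReal (Real.exp (θ ^ 2)) := by
  have h : ∀ x, gden θ x * gden θ x
      = ENNReal.ofReal (Real.exp (θ ^ 2)) * gden (2 * θ) x := by
    intro x
    simp only [gden, ← ENNReal.ofReal_mul (Real.exp_nonneg _), ← Real.exp_add]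
    congr 1
    ring_nf
  simp only [h]
  rw [lintegral_const_mul _ (gden_measurable (2 * θ))]
  have : ∫⁻ x, gden (2 * θ) x ∂gaussianReal 0 1 = 1 := by
    have := withDensity_gden (2 * θ)
    calc ∫⁻ x, gden (2 * θ) x ∂gaussianReal 0 1
        = ((gaussianReal 0 1).withDensity (gden (2 * θ))) Set.univ := by
          rw [withDensity_apply _ MeasurableSet.univ, Measure.restrict_univ]
      _ = 1 := by rw [this]; exact measure_univ
  rw [this, mul_one]

lemma lintegral_pi_prod {n : ℕ} (μ : Measure ℝ) [SigmaFinite μ] (f : Fin n → ℝ → ℝ≥0∞)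
    (hf : ∀ i, Measurable (f i)) :
    ∫⁻ y, ∏ i, f i (y i) ∂(Measure.pi fun _ : Fin n => μ) = ∏ i, ∫⁻ x, f i x ∂μ := by
  induction n with
  | zero => simp
  | succ n ih =>
    have hmp := measurePreserving_piFinSuccAbove (fun _ : Fin (n + 1) => μ) 0
    set e := MeasurableEquiv.piFinSuccAbove (fun _ : Fin (n + 1) => ℝ) 0 with he
    have hG : Measurable (fun z : ℝ × (Fin n → ℝ) =>
        f 0 z.1 * ∏ j, f j.succ (z.2 j)) := by
      exact ((hf 0).comp measurable_fst).mul
        (Finset.measurable_prod _ fun j _ =>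
          (hf j.succ).comp ((measurable_pi_apply j).comp measurable_snd))
    calc ∫⁻ y, ∏ i, f i (y i) ∂(Measure.pi fun _ : Fin (n + 1) => μ)
        = ∫⁻ y, (fun z : ℝ × (Fin n → ℝ) => f 0 z.1 * ∏ j, f j.succ (z.2 j)) (e y)
            ∂(Measure.pi fun _ : Fin (n + 1) => μ) := by
          refine lintegral_congr fun y => ?_
          simp only [he, MeasurableEquiv.piFinSuccAbove_apply]
          rw [Fin.prod_univ_succ]
          rfl
      _ = ∫⁻ z, f 0 z.1 * ∏ j, f j.succ (z.2 j)
            ∂(μ.prod (Measure.pi fun _ : Fin n => μ)) := hmp.lintegral_comp hG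
      _ = (∫⁻ x, f 0 x ∂μ) * ∫⁻ y, ∏ j : Fin n, f j.succ (y j) ∂(Measure.pi fun _ : Fin n => μ) := by
          exact lintegral_prod_mul (hf 0).aemeasurable
            (Finset.measurable_prod _ fun (j : Fin n) _ =>
              (hf j.succ).comp (measurable_pi_apply j)).aemeasurable
      _ = ∏ i, ∫⁻ x, f i x ∂μ := by
          rw [ih (fun j : Fin n => f j.succ) (fun j => hf j.succ), Fin.prod_univ_succ]

/-- Joint law of a sample of size `n` of i.i.d. `N(θ,1)` observations. -/
noncomputable def gaussP (n : ℕ) (θ : ℝ) : Measure (Fin n → ℝ) :=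
  Measure.pi fun _ => gaussianReal θ 1

lemma gaussP_eq_withDensity (n : ℕ) (θ : ℝ) :
    gaussP n θ = (gaussP n 0).withDensity (fun y => ∏ i, gden θ (y i)) := by
  refine Measure.pi_eq fun s hs => ?_
  have hD : Measurable (fun y : Fin n → ℝ => ∏ i, gden θ (y i)) :=
    Finset.measurable_prod _ fun i _ => (gden_measurable θ).comp (measurable_pi_apply i)
  rw [withDensity_apply _ (MeasurableSet.univ_pi hs),
    ← lintegral_indicator (MeasurableSet.univ_pi hs) (fun y => ∏ i, gden θ (y i))]
  have hind : ∀ y : Fin n → ℝ,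
      (Set.pi Set.univ s).indicator (fun y => ∏ i, gden θ (y i)) y
        = ∏ i, (s i).indicator (gden θ) (y i) := by
    intro y
    by_cases hy : y ∈ Set.pi Set.univ s
    · rw [Set.indicator_of_mem hy]
      exact Finset.prod_congr rfl fun i _ =>
        (Set.indicator_of_mem (hy i (Set.mem_univ i)) _).symm
    · rw [Set.indicator_of_notMem hy]
      simp only [Set.mem_pi, Set.mem_univ, forall_true_left, not_forall] at hy
      obtain ⟨i, hi⟩ := hy
      exact (Finset.prod_eq_zero (Finset.mem_univ i)
        (by rw [Set.indicator_of_notMem hi])).symm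
  simp only [hind]
  rw [show gaussP n 0 = Measure.pi fun _ : Fin n => gaussianReal 0 1 from rfl,
    lintegral_pi_prod _ _ (fun i => (gden_measurable θ).indicator (hs i))]
  refine Finset.prod_congr rfl fun i _ => ?_
  rw [lintegral_indicator (hs i), ← withDensity_apply _ (hs i), withDensity_gden]

lemma rpow_two' (x : ℝ≥0∞) : x ^ (2 : ℝ) = x * x := by
  rw [show (2 : ℝ) = ((2 : ℕ) : ℝ) by norm_num, ENNReal.rpow_natCast, sq]

lemma lintegral_Dsq (n : ℕ) (θ : ℝ) :
    ∫⁻ y, (∏ i, gden θ (y i)) * (∏ i, gden θ (y i)) ∂gaussP n 0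
      = ENNReal.ofReal (Real.exp (n * θ ^ 2)) := by
  have h : ∀ y : Fin n → ℝ, (∏ i, gden θ (y i)) * ∏ i, gden θ (y i)
      = ∏ i, (gden θ (y i) * gden θ (y i)) := fun y => (Finset.prod_mul_distrib).symm
  simp only [h]
  rw [show gaussP n 0 = Measure.pi fun _ : Fin n => gaussianReal 0 1 from rfl,
    lintegral_pi_prod _ (fun _ x => gden θ x * gden θ x) (fun _ => (gden_measurable θ).mul (gden_measurable θ))]
  simp only [lintegral_gden_sq]
  rw [Finset.prod_const, ← ENNReal.ofReal_pow (Real.exp_nonneg _), ← Real.exp_nat_mul]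
  simp [Finset.card_univ]

lemma nu_compl_le (n : ℕ) (θ : ℝ) {A : Set (Fin n → ℝ)} (hA : MeasurableSet A) :
    gaussP n θ Aᶜ
      ≤ (gaussP n 0 Aᶜ) ^ (1/2 : ℝ) * ENNReal.ofReal (Real.exp (n * θ ^ 2)) ^ (1/2 : ℝ) := by
  have hD : Measurable (fun y : Fin n → ℝ => ∏ i, gden θ (y i)) :=
    Finset.measurable_prod _ fun i _ => (gden_measurable θ).comp (measurable_pi_apply i)
  have h2 : Real.HolderConjugate 2 2 := Real.HolderConjugate.two_two
  rw [gaussP_eq_withDensity, withDensity_apply _ hA.compl,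
    ← lintegral_indicator hA.compl]
  calc ∫⁻ y, Aᶜ.indicator (fun y => ∏ i, gden θ (y i)) y ∂gaussP n 0
      = ∫⁻ y, (Aᶜ.indicator (1 : (Fin n → ℝ) → ℝ≥0∞) * fun y : Fin n → ℝ => ∏ i, gden θ (y i)) y ∂gaussP n 0 := by
        refine lintegral_congr fun y => ?_
        by_cases hy : y ∈ Aᶜ <;> simp [hy]
    _ ≤ (∫⁻ y, (Aᶜ.indicator (1 : (Fin n → ℝ) → ℝ≥0∞) y) ^ (2 : ℝ) ∂gaussP n 0) ^ (1/2 : ℝ)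
          * (∫⁻ y, (∏ i, gden θ (y i)) ^ (2 : ℝ) ∂gaussP n 0) ^ (1/2 : ℝ) :=
        ENNReal.lintegral_mul_le_Lp_mul_Lq _ h2
          (measurable_one.indicator hA.compl).aemeasurable hD.aemeasurable
    _ = (gaussP n 0 Aᶜ) ^ (1/2 : ℝ)
          * ENNReal.ofReal (Real.exp (n * θ ^ 2)) ^ (1/2 : ℝ) := by
        congr 1
        · congr 1
          have : ∀ y, (Aᶜ.indicator (1 : (Fin n → ℝ) → ℝ≥0∞) y) ^ (2 : ℝ)
              = Aᶜ.indicator 1 y := by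
            intro y
            by_cases hy : y ∈ Aᶜ <;>
              simp [hy, ENNReal.zero_rpow_of_pos, ENNReal.one_rpow]
          simp only [this]
          rw [lintegral_indicator hA.compl]
          simp
        · congr 1
          simp only [rpow_two']
          exact lintegral_Dsq n θ

instance (n : ℕ) (θ : ℝ) : IsProbabilityMeasure (gaussP n θ) := by
  unfold gaussP; infer_instance

theorem stmt_0
    (est : (n : ℕ) → (Fin n → ℝ) → ℝ)
    (hmeas : ∀ n, Measurable (est n))
    (hsparse : Tendsto (fun n => gaussP n 0 {y | est n y = 0}) atTop (𝓝 1))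
    (s : ℝ) :
    ENNReal.ofReal (s ^ 2) ≤
      Filter.liminf (fun n : ℕ =>
        ∫⁻ y, ENNReal.ofReal ((n : ℝ) * (est n y - (-s / Real.sqrt n)) ^ 2)
          ∂(gaussP n (-s / Real.sqrt n))) atTop := by
  set A : (n : ℕ) → Set (Fin n → ℝ) := fun n => {y | est n y = 0} with hAdef
  have hAm : ∀ n, MeasurableSet (A n) := fun n => (hmeas n) (measurableSet_singleton 0)
  have hθsq : ∀ n : ℕ, n ≠ 0 → (n : ℝ) * (-s / Real.sqrt n) ^ 2 = s ^ 2 := by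
    intro n hn
    have hn' : (0 : ℝ) < n := by positivity
    have h1 : (-s / Real.sqrt n) ^ 2 = s ^ 2 / n := by
      rw [div_pow, neg_sq, Real.sq_sqrt hn'.le]
    rw [h1, mul_comm, div_mul_cancel₀ _ (ne_of_gt hn')]
  -- the sparsity prob complement tends to 0
  have hcompl : Tendsto (fun n => gaussP n 0 (A n)ᶜ) atTop (𝓝 0) := by
    have h1 : ∀ n, gaussP n 0 (A n)ᶜ = 1 - gaussP n 0 (A n) := fun n =>
      prob_compl_eq_one_sub (hAm n)
    simp only [h1]
    have := ENNReal.Tendsto.sub (tendsto_const_nhds (x := (1 : ℝ≥0∞)))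
      hsparse (Or.inl ENNReal.one_ne_top)
    simpa using this
  -- the bound tends to 0
  have hbound : Tendsto (fun n => (gaussP n 0 (A n)ᶜ) ^ (1/2 : ℝ)
      * ENNReal.ofReal (Real.exp (s ^ 2)) ^ (1/2 : ℝ)) atTop (𝓝 0) := by
    have h0 : Tendsto (fun n => (gaussP n 0 (A n)ᶜ) ^ (1/2 : ℝ)) atTop (𝓝 0) := by
      have := (ENNReal.continuous_rpow_const (y := (1/2 : ℝ))).continuousAt.tendsto.comp hcompl
      simpa [Function.comp_def, ENNReal.zero_rpow_of_pos] using this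
    have := ENNReal.Tendsto.mul_const (b := ENNReal.ofReal (Real.exp (s ^ 2)) ^ (1/2 : ℝ)) h0
      (Or.inr (ENNReal.rpow_ne_top_of_nonneg (by norm_num) ENNReal.ofReal_ne_top))
    simpa using this
  -- contiguity: the event A n has probability tending to 1 under the local alternative
  have hνc : Tendsto (fun n => gaussP n (-s / Real.sqrt n) (A n)ᶜ) atTop (𝓝 0) := by
    apply tendsto_of_tendsto_of_tendsto_of_le_of_le' tendsto_const_nhds hbound
    · exact Eventually.of_forall fun n => zero_le
    · filter_upwards [eventually_ge_atTop 1] with n hn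
      calc gaussP n (-s / Real.sqrt n) (A n)ᶜ
          ≤ (gaussP n 0 (A n)ᶜ) ^ (1/2 : ℝ)
            * ENNReal.ofReal (Real.exp ((n : ℝ) * (-s / Real.sqrt n) ^ 2)) ^ (1/2 : ℝ) :=
            nu_compl_le n _ (hAm n)
        _ = _ := by rw [hθsq n (by omega)]
  have hν : Tendsto (fun n => gaussP n (-s / Real.sqrt n) (A n)) atTop (𝓝 1) := by
    have h1 : ∀ n, gaussP n (-s / Real.sqrt n) (A n)
        = 1 - gaussP n (-s / Real.sqrt n) (A n)ᶜ := fun n => by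
      rw [← prob_compl_eq_one_sub (hAm n).compl, compl_compl]
    simp only [h1]
    have := ENNReal.Tendsto.sub (tendsto_const_nhds (x := (1 : ℝ≥0∞)))
      hνc (Or.inl ENNReal.one_ne_top)
    simpa using this
  -- pointwise lower bound for the risk
  have key : ∀ᶠ n in atTop,
      ENNReal.ofReal (s ^ 2) * gaussP n (-s / Real.sqrt n) (A n)
        ≤ ∫⁻ y, ENNReal.ofReal ((n : ℝ) * (est n y - (-s / Real.sqrt n)) ^ 2)
            ∂gaussP n (-s / Real.sqrt n) := by
    filter_upwards [eventually_ge_atTop 1] with n hn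
    calc ENNReal.ofReal (s ^ 2) * gaussP n (-s / Real.sqrt n) (A n)
        = ∫⁻ _ in A n, ENNReal.ofReal (s ^ 2) ∂gaussP n (-s / Real.sqrt n) :=
          (setLIntegral_const _ _).symm
      _ = ∫⁻ y in A n, ENNReal.ofReal ((n : ℝ) * (est n y - (-s / Real.sqrt n)) ^ 2)
            ∂gaussP n (-s / Real.sqrt n) := by
          refine setLIntegral_congr_fun (hAm n) (fun y hy => ?_)
          have hy0 : est n y = 0 := hy
          rw [hy0]
          congr 1
          rw [← hθsq n (by omega)]
          ring_nf
      _ ≤ _ := setLIntegral_le_lintegral _ _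
  -- put things together
  calc ENNReal.ofReal (s ^ 2)
      = liminf (fun n => ENNReal.ofReal (s ^ 2) * gaussP n (-s / Real.sqrt n) (A n)) atTop := by
        symm
        apply Tendsto.liminf_eq
        have := ENNReal.Tendsto.const_mul (a := ENNReal.ofReal (s ^ 2)) hν (Or.inl one_ne_zero)
        simpa using this
    _ ≤ _ := liminf_le_liminf key
end

section
/- The maximal scaled mean squared error of Hodges' estimator diverges: sup_{θ∈ℝ} E_{n,θ}[n(θ̂_n − θ)²] → ∞ as n → ∞, where θ̂_n = ȳ_n·1{|ȳ_n| > n^{−1/4}}. -/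
open MeasureTheory ProbabilityTheory Filter Topology
open scoped ENNReal NNReal
open Real Set

/-- The sample mean of `n` observations. -/
noncomputable def sampleMean (n : ℕ) (y : Fin n → ℝ) : ℝ := (∑ t, y t) / n

/-- Hodges' estimator: the sample mean thresholded at `n^(-1/4)`. -/
noncomputable def hodges (n : ℕ) (y : Fin n → ℝ) : ℝ :=
  if (n : ℝ) ^ (-(1/4 : ℝ)) < |sampleMean n y| then sampleMean n y else 0



lemma integrable_sq_exp_gauss : Integrable (fun x : ℝ => x ^ 2 * Real.exp (-x ^ 2 / 2)) := by
  have h := integrable_rpow_mul_exp_neg_mul_sq (b := 1/2) (by norm_num) (s := ((2:ℕ):ℝ)) (by norm_num)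
  refine h.congr (Filter.Eventually.of_forall fun x => ?_)
  show x ^ ((2:ℕ):ℝ) * Real.exp (-(1/2) * x ^ 2) = _
  rw [Real.rpow_natCast, show -(1/2:ℝ)*x^2 = -x^2/2 by ring]

lemma integrable_exp_gauss : Integrable (fun x : ℝ => Real.exp (-x ^ 2 / 2)) := by
  have h := integrable_exp_neg_mul_sq (b := (1/2:ℝ)) (by norm_num)
  refine h.congr (Filter.Eventually.of_forall fun x => ?_)
  ring_nf

lemma tendsto_x_exp : Tendsto (fun x : ℝ => -x * Real.exp (-x ^ 2 / 2)) atTop (𝓝 0) := by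
  have h := rpow_mul_exp_neg_mul_sq_isLittleO_exp_neg (b := 1/2) (by norm_num) 1
  have h2 : Tendsto (fun x : ℝ => Real.exp (-(1/2) * x)) atTop (𝓝 0) := by
    apply Real.tendsto_exp_atBot.comp
    exact tendsto_id.const_mul_atTop_of_neg (by norm_num)
  have h3 : Tendsto (fun x : ℝ => x ^ (1:ℝ) * Real.exp (-(1/2) * x ^ 2)) atTop (𝓝 0) :=
    h.trans_tendsto h2
  have h4 : Tendsto (fun x : ℝ => x * Real.exp (-x ^ 2 / 2)) atTop (𝓝 0) := by
    refine h3.congr' ?_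
    filter_upwards [eventually_gt_atTop (0:ℝ)] with x hx
    rw [Real.rpow_one]
    ring_nf
  simpa using h4.neg

lemma integral_Ioi_sq_exp :
    ∫ x in Ioi (0:ℝ), (x ^ 2 - 1) * Real.exp (-x ^ 2 / 2) = 0 := by
  have hderiv : ∀ x ∈ Ici (0:ℝ), HasDerivAt (fun x : ℝ => -x * Real.exp (-x ^ 2 / 2))
      ((x ^ 2 - 1) * Real.exp (-x ^ 2 / 2)) x := by
    intro x _
    have h1 : HasDerivAt (fun x : ℝ => -x ^ 2 / 2) (-x) x := by
      have := ((hasDerivAt_pow 2 x).neg).div_const 2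
      convert this using 1
      all_goals try rfl
      push_cast
      ring
    have h2 : HasDerivAt (fun x : ℝ => Real.exp (-x ^ 2 / 2)) (Real.exp (-x ^ 2 / 2) * (-x)) x :=
      (Real.hasDerivAt_exp _).comp x h1
    have h3 := (hasDerivAt_neg x).mul h2
    convert h3 using 1
    all_goals try rfl
    ring
  have hint : IntegrableOn (fun x : ℝ => (x ^ 2 - 1) * Real.exp (-x ^ 2 / 2)) (Ioi 0) := by
    have := (integrable_sq_exp_gauss.sub integrable_exp_gauss).integrableOn (s := Ioi 0)
    refine this.congr_fun (fun x _ => by simp; ring) measurableSet_Ioi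
  have := integral_Ioi_of_hasDerivAt_of_tendsto' hderiv hint tendsto_x_exp
  simpa using this



lemma integral_sq_exp_eq : ∫ x : ℝ, x ^ 2 * Real.exp (-x ^ 2 / 2)
    = ∫ x : ℝ, Real.exp (-x ^ 2 / 2) := by
  have hint : Integrable (fun x : ℝ => (x ^ 2 - 1) * Real.exp (-x ^ 2 / 2)) := by
    refine (integrable_sq_exp_gauss.sub integrable_exp_gauss).congr
      (Filter.Eventually.of_forall fun x => by simp; ring)
  have hIic : ∫ x in Iic (0:ℝ), (x ^ 2 - 1) * Real.exp (-x ^ 2 / 2) = 0 := by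
    rw [← show -(0:ℝ) = 0 by ring, ← integral_comp_neg_Ioi]
    simpa using integral_Ioi_sq_exp
  have htot : ∫ x : ℝ, (x ^ 2 - 1) * Real.exp (-x ^ 2 / 2) = 0 := by
    rw [← setIntegral_univ (μ := volume) (f := fun x : ℝ => (x ^ 2 - 1) * Real.exp (-x ^ 2 / 2)),
      ← Set.Iic_union_Ioi (a := (0:ℝ)),
      setIntegral_union (Set.Iic_disjoint_Ioi le_rfl) measurableSet_Ioi
        hint.integrableOn hint.integrableOn, hIic, integral_Ioi_sq_exp]
    norm_num
  have hs := integral_sub integrable_sq_exp_gauss integrable_exp_gauss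
  have htot' : ∫ x : ℝ, (x ^ 2 * Real.exp (-x ^ 2 / 2) - Real.exp (-x ^ 2 / 2)) = 0 := by
    rw [← htot]; exact integral_congr_ae (Filter.Eventually.of_forall fun x => by ring)
  rw [htot'] at hs
  linarith

lemma pdf_eq : ∀ x : ℝ, gaussianPDFReal 0 1 x = (Real.sqrt (2 * π))⁻¹ * Real.exp (-x ^ 2 / 2) := by
  intro x
  simp [gaussianPDFReal]

lemma pdf_toReal : ∀ x : ℝ, (gaussianPDF 0 1 x).toReal = gaussianPDFReal 0 1 x := fun x =>
  ENNReal.toReal_ofReal (gaussianPDFReal_nonneg 0 1 x)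

lemma gauss_integral_eq (g : ℝ → ℝ) :
    ∫ x, g x ∂(gaussianReal 0 1) = ∫ x, gaussianPDFReal 0 1 x * g x := by
  rw [gaussianReal_of_var_ne_zero 0 one_ne_zero]
  have h1 : (volume : Measure ℝ).withDensity (gaussianPDF 0 1)
      = (volume : Measure ℝ).withDensity (fun x => ((gaussianPDFReal 0 1 x).toNNReal : ℝ≥0∞)) :=
    rfl
  rw [h1, integral_withDensity_eq_integral_smul
    ((measurable_gaussianPDFReal 0 1).real_toNNReal) g]
  congr 1
  funext x
  simp [NNReal.smul_def, Real.coe_toNNReal _ (gaussianPDFReal_nonneg 0 1 x)]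

lemma gauss_m2 : ∫ x, x ^ 2 ∂(gaussianReal 0 1) = 1 := by
  rw [gauss_integral_eq]
  simp_rw [pdf_eq, mul_assoc]
  rw [integral_const_mul]
  simp_rw [show ∀ x : ℝ, Real.exp (-x ^ 2 / 2) * x ^ 2 = x ^ 2 * Real.exp (-x ^ 2 / 2) by
    intro x; ring]
  rw [integral_sq_exp_eq]
  have : ∫ x : ℝ, Real.exp (-x ^ 2 / 2) = Real.sqrt (2 * π) := by
    have h := integral_gaussian (1/2)
    simp_rw [show ∀ x : ℝ, -(1/2:ℝ) * x ^ 2 = -x ^ 2 / 2 by intro x; ring] at h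
    rw [h]
    congr 1
    rw [div_div_eq_mul_div, div_one, mul_comm]
  rw [this, inv_mul_cancel₀]
  positivity

lemma gauss_m1 : ∫ x, x ∂(gaussianReal 0 1) = 0 := by
  rw [gauss_integral_eq]
  have heven : ∀ x : ℝ, gaussianPDFReal 0 1 (-x) = gaussianPDFReal 0 1 x := by
    intro x; simp [gaussianPDFReal]
  have h := (Measure.measurePreserving_neg (volume : Measure ℝ)).integral_comp
    (Homeomorph.neg ℝ).measurableEmbedding (fun y => gaussianPDFReal 0 1 y * y)
  have h2 : ∫ x : ℝ, gaussianPDFReal 0 1 (-x) * (-x) = ∫ x : ℝ, gaussianPDFReal 0 1 x * x := h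
  simp_rw [heven, mul_neg] at h2
  rw [integral_neg] at h2
  linarith

lemma gauss_int_id : Integrable (fun x : ℝ => x) (gaussianReal 0 1) := by
  rw [gaussianReal_of_var_ne_zero 0 one_ne_zero,
    integrable_withDensity_iff (measurable_gaussianPDF 0 1)
      (Filter.Eventually.of_forall fun x => ENNReal.ofReal_lt_top)]
  have h : Integrable (fun x : ℝ => x * Real.exp (-(1/2) * x ^ 2)) :=
    integrable_mul_exp_neg_mul_sq (by norm_num)
  refine (h.const_mul ((Real.sqrt (2*π))⁻¹)).congr
    (Filter.Eventually.of_forall fun x => ?_)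
  simp only [pdf_toReal, pdf_eq]
  ring_nf

lemma gauss_int_sq : Integrable (fun x : ℝ => x ^ 2) (gaussianReal 0 1) := by
  rw [gaussianReal_of_var_ne_zero 0 one_ne_zero,
    integrable_withDensity_iff (measurable_gaussianPDF 0 1)
      (Filter.Eventually.of_forall fun x => ENNReal.ofReal_lt_top)]
  refine (integrable_sq_exp_gauss.const_mul ((Real.sqrt (2*π))⁻¹)).congr
    (Filter.Eventually.of_forall fun x => ?_)
  simp only [pdf_toReal, pdf_eq]
  ring_nf



lemma pi_integral_prod {ι : Type*} [Fintype ι] {α : Type*} [MeasurableSpace α]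
    (μ : Measure α) [SigmaFinite μ] (f : ι → α → ℝ) :
    ∫ x : ι → α, ∏ i, f i (x i) ∂(Measure.pi fun _ => μ) = ∏ i, ∫ x, f i x ∂μ := by
  letI : MeasureSpace α := ⟨μ⟩
  exact integral_fintype_prod_eq_prod f

lemma pi_integrable_prod {ι : Type*} [Fintype ι] {α : Type*} [MeasurableSpace α]
    (μ : Measure α) [SigmaFinite μ] (f : ι → α → ℝ) (hf : ∀ i, Integrable (f i) μ) :
    Integrable (fun x : ι → α => ∏ i, f i (x i)) (Measure.pi fun _ => μ) := by
  letI : MeasureSpace α := ⟨μ⟩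
  exact Integrable.fintype_prod hf

section
variable (n : ℕ)


noncomputable def fd (s t : Fin n) : Fin n → ℝ → ℝ := fun i =>
  if i = s then (if s = t then fun x => x ^ 2 else fun x => x)
  else if i = t then (fun x => x) else fun _ => 1

lemma fd_int (s t : Fin n) (i : Fin n) : Integrable (fd n s t i) (gaussianReal 0 1) := by
  unfold fd
  split_ifs <;> first
    | exact gauss_int_sq
    | exact gauss_int_id
    | exact integrable_const 1

lemma fd_prod (s t : Fin n) (x : Fin n → ℝ) : ∏ i, fd n s t i (x i) = x s * x t := by
  rcases eq_or_ne s t with rfl | hst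
  · rw [Finset.prod_eq_single s]
    · simp [fd, sq]
    · intro i _ hi; simp [fd, hi]
    · simp
  · rw [Finset.prod_eq_mul_of_mem s t (Finset.mem_univ s) (Finset.mem_univ t) hst]
    · simp [fd, hst]
    · intro i _ hi
      simp [fd, hi.1, hi.2]

lemma integrable_cross (s t : Fin n) : Integrable (fun x : Fin n → ℝ => x s * x t) (Measure.pi fun _ : Fin n => gaussianReal 0 1) := by
  have := pi_integrable_prod (gaussianReal 0 1) (fd n s t) (fd_int n s t)
  refine this.congr (Filter.Eventually.of_forall fun x => ?_)
  exact fd_prod n s t x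

lemma integral_cross (s t : Fin n) :
    ∫ x, x s * x t ∂(Measure.pi fun _ : Fin n => gaussianReal 0 1) = if s = t then 1 else 0 := by
  have h : ∫ x : Fin n → ℝ, ∏ i, fd n s t i (x i) ∂(Measure.pi fun _ : Fin n => gaussianReal 0 1) = ∏ i, ∫ x, fd n s t i x ∂(gaussianReal 0 1) :=
    pi_integral_prod _ _
  simp_rw [fd_prod] at h
  rw [h]
  rcases eq_or_ne s t with rfl | hst
  · simp only [if_pos rfl]
    rw [Finset.prod_eq_single s]
    · simp [fd, gauss_m2]
    · intro i _ hi; simp [fd, hi]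
    · simp
  · rw [if_neg hst, Finset.prod_eq_zero (Finset.mem_univ s)]
    simp [fd, hst, gauss_m1]

lemma integral_sum_sq :
    ∫ x : Fin n → ℝ, (∑ t, x t) ^ 2 ∂(Measure.pi fun _ : Fin n => gaussianReal 0 1) = n := by
  have hexp : ∀ x : Fin n → ℝ, (∑ t, x t) ^ 2 = ∑ s, ∑ t, x s * x t := by
    intro x
    rw [sq, Finset.sum_mul_sum]
  simp_rw [hexp]
  rw [integral_finset_sum _ (fun s _ => integrable_finset_sum _ (fun t _ => integrable_cross n s t))]
  have : ∀ s : Fin n, ∫ x : Fin n → ℝ, ∑ t, x s * x t ∂(Measure.pi fun _ : Fin n => gaussianReal 0 1) = 1 := by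
    intro s
    rw [integral_finset_sum _ (fun t _ => integrable_cross n s t)]
    simp_rw [integral_cross]
    simp
  simp_rw [this]
  simp

lemma integrable_sum_sq : Integrable (fun x : Fin n → ℝ => (∑ t, x t) ^ 2) (Measure.pi fun _ : Fin n => gaussianReal 0 1) := by
  have : Integrable (fun x : Fin n → ℝ => ∑ s, ∑ t, x s * x t) (Measure.pi fun _ : Fin n => gaussianReal 0 1) :=
    integrable_finset_sum _ (fun s _ => integrable_finset_sum _ (fun t _ => integrable_cross n s t))
  refine this.congr (Filter.Eventually.of_forall fun x => ?_)
  show ∑ s, ∑ t, x s * x t = (∑ t, x t) ^ 2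
  rw [sq, Finset.sum_mul_sum]

end




lemma meas_sampleMean (n : ℕ) : Measurable (sampleMean n) :=
  (Finset.measurable_sum _ (fun t _ => measurable_pi_apply t)).div_const _

lemma integrable_sampleMean_sq (n : ℕ) :
    Integrable (fun y : Fin n → ℝ => (sampleMean n y) ^ 2) (gaussP n 0) := by
  have h := (integrable_sum_sq n).div_const ((n:ℝ)^2)
  refine h.congr (Filter.Eventually.of_forall fun y => ?_)
  show (∑ t, y t) ^ 2 / (n:ℝ)^2 = (sampleMean n y) ^ 2
  rw [sampleMean, div_pow]

lemma lintegral_sampleMean_sq (n : ℕ) :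
    ∫⁻ y, ENNReal.ofReal ((sampleMean n y) ^ 2) ∂(gaussP n 0)
      = ENNReal.ofReal (1 / n) := by
  rw [← ofReal_integral_eq_lintegral_ofReal (integrable_sampleMean_sq n)
    (Filter.Eventually.of_forall fun y => sq_nonneg _)]
  congr 1
  have : ∀ y : Fin n → ℝ, (sampleMean n y) ^ 2 = (∑ t, y t) ^ 2 / (n:ℝ)^2 := by
    intro y; rw [sampleMean, div_pow]
  simp_rw [this]
  rw [integral_div, gaussP, integral_sum_sq]
  rcases Nat.eq_zero_or_pos n with rfl | hn
  · simp
  · rw [sq]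
    rw [div_mul_eq_div_div, div_self (by positivity : (n:ℝ) ≠ 0)]

lemma translate_preserving (n : ℕ) (θ : ℝ) :
    MeasurePreserving (fun y : Fin n → ℝ => fun i => θ + y i) (gaussP n 0) (gaussP n θ) := by
  refine measurePreserving_pi _ _ (fun i => ⟨measurable_const_add θ, ?_⟩)
  rw [gaussianReal_map_const_add θ, zero_add]

lemma reflect_coord (θ : ℝ) :
    MeasurePreserving (fun x : ℝ => 2*θ - x) (gaussianReal θ 1) (gaussianReal θ 1) := by
  refine ⟨measurable_const.sub measurable_id, ?_⟩
  rw [show (fun x : ℝ => 2*θ - x) = (fun x : ℝ => x + 2*θ) ∘ (fun x : ℝ => (-1) * x) by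
    funext x; simp; ring]
  rw [← Measure.map_map (measurable_add_const _) (measurable_const_mul _)]
  rw [gaussianReal_map_const_mul (-1)]
  have h1 : (.mk ((-1:ℝ)^2) (sq_nonneg _) : ℝ≥0) * 1 = 1 := by
    ext; norm_num
  rw [h1, gaussianReal_map_add_const (2*θ)]
  congr 1
  ring

lemma reflect_preserving (n : ℕ) (θ : ℝ) :
    MeasurePreserving (fun y : Fin n → ℝ => fun i => 2*θ - y i) (gaussP n θ) (gaussP n θ) :=
  measurePreserving_pi _ _ (fun _ => reflect_coord θ)

lemma sampleMean_affine (n : ℕ) (hn : 1 ≤ n) (a : ℝ) (y : Fin n → ℝ) :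
    sampleMean n (fun i => a + y i) = a + sampleMean n y := by
  have hn0 : (n:ℝ) ≠ 0 := by positivity
  rw [sampleMean, sampleMean, Finset.sum_add_distrib, Finset.sum_const]
  simp only [Finset.card_univ, Fintype.card_fin, nsmul_eq_mul]
  field_simp

instance inst_s7 (n : ℕ) (θ : ℝ) : IsProbabilityMeasure (gaussP n θ) :=
  inferInstanceAs (IsProbabilityMeasure (Measure.pi fun _ : Fin n => gaussianReal θ 1))

lemma sampleMean_reflect (n : ℕ) (hn : 1 ≤ n) (θ : ℝ) (y : Fin n → ℝ) :
    sampleMean n (fun i => 2*θ - y i) = 2*θ - sampleMean n y := by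
  have h := sampleMean_affine n hn (2*θ) (fun i => - y i)
  have h2 : sampleMean n (fun i => -y i) = - sampleMean n y := by
    rw [sampleMean, sampleMean, Finset.sum_neg_distrib, neg_div]
  rw [show (fun i => 2*θ - y i) = (fun i => 2*θ + (fun j => -y j) i) by funext i; ring] at *
  rw [h, h2]
  ring

lemma half_le_measure (n : ℕ) (hn : 1 ≤ n) (θ : ℝ) :
    (2:ℝ≥0∞)⁻¹ ≤ gaussP n θ {y | sampleMean n y ≤ θ} := by
  set S : Set (Fin n → ℝ) := {y | sampleMean n y ≤ θ} with hS
  have hSm : MeasurableSet S := measurableSet_le (meas_sampleMean n) measurable_const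
  have hS'm : MeasurableSet {y : Fin n → ℝ | θ ≤ sampleMean n y} :=
    measurableSet_le measurable_const (meas_sampleMean n)
  have hR : gaussP n θ {y | θ ≤ sampleMean n y} = gaussP n θ S := by
    conv_lhs => rw [← (reflect_preserving n θ).map_eq]
    rw [Measure.map_apply (reflect_preserving n θ).measurable hS'm]
    congr 1
    ext y
    simp only [Set.mem_preimage, Set.mem_setOf_eq, hS]
    rw [sampleMean_reflect n hn θ y]
    constructor <;> intro h <;> linarith
  have hunion : (1:ℝ≥0∞) ≤ gaussP n θ S + gaussP n θ {y | θ ≤ sampleMean n y} := by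
    have hcov : (Set.univ : Set (Fin n → ℝ)) ⊆ S ∪ {y | θ ≤ sampleMean n y} := by
      intro y _
      rcases le_total (sampleMean n y) θ with h | h
      · exact Or.inl h
      · exact Or.inr h
    calc (1:ℝ≥0∞) = gaussP n θ Set.univ := by
          rw [measure_univ]
      _ ≤ gaussP n θ (S ∪ {y | θ ≤ sampleMean n y}) := measure_mono hcov
      _ ≤ _ := measure_union_le _ _
  rw [hR] at hunion
  have h2 : (1:ℝ≥0∞) ≤ 2 * gaussP n θ S := by
    rw [two_mul]; exact hunion
  calc (2:ℝ≥0∞)⁻¹ = 2⁻¹ * 1 := (mul_one _).symm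
    _ ≤ 2⁻¹ * (2 * gaussP n θ S) := mul_le_mul_right h2 _
    _ = gaussP n θ S := by
        rw [← mul_assoc, ENNReal.inv_mul_cancel (by norm_num) (by norm_num), one_mul]

lemma rpow_key (n : ℕ) (hn : 1 ≤ n) :
    (n:ℝ) * ((n:ℝ) ^ (-(1/4 : ℝ))) ^ 2 = Real.sqrt n := by
  have hn0 : (0:ℝ) < n := by exact_mod_cast hn
  have h1 : ((n:ℝ) ^ (-(1/4 : ℝ))) ^ 2 = (n:ℝ) ^ (-(1/2 : ℝ)) := by
    rw [← Real.rpow_natCast ((n:ℝ) ^ (-(1/4 : ℝ))) 2, ← Real.rpow_mul hn0.le]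
    norm_num
  rw [h1]
  have h2 : (n:ℝ) * (n:ℝ) ^ (-(1/2:ℝ)) = (n:ℝ) ^ ((1:ℝ) + -(1/2:ℝ)) := by
    rw [Real.rpow_add hn0, Real.rpow_one]
  rw [h2, show (1:ℝ) + -(1/2:ℝ) = 1/2 by norm_num, ← Real.sqrt_eq_rpow]

lemma tail_le (n : ℕ) (hn : 1 ≤ n) :
    gaussP n ((n:ℝ) ^ (-(1/4 : ℝ))) {y | sampleMean n y < -((n:ℝ) ^ (-(1/4 : ℝ)))}
      ≤ ENNReal.ofReal (1/4) := by
  set c : ℝ := (n:ℝ) ^ (-(1/4 : ℝ)) with hc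
  have hn0 : (0:ℝ) < n := by exact_mod_cast hn
  have hcpos : 0 < c := Real.rpow_pos_of_pos hn0 _
  have hBm : MeasurableSet {y : Fin n → ℝ | sampleMean n y < -c} :=
    measurableSet_lt (meas_sampleMean n) measurable_const
  have hmap := (translate_preserving n c).map_eq
  have h1 : gaussP n c {y | sampleMean n y < -c}
      = gaussP n 0 {y | sampleMean n y < -(2*c)} := by
    rw [← hmap, Measure.map_apply (translate_preserving n c).measurable hBm]
    congr 1
    ext y
    simp only [Set.mem_preimage, Set.mem_setOf_eq]
    rw [sampleMean_affine n hn c y]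
    constructor <;> intro h <;> linarith
  rw [h1]
  have hsub : {y : Fin n → ℝ | sampleMean n y < -(2*c)}
      ⊆ {y | ENNReal.ofReal (4*c^2) ≤ ENNReal.ofReal ((sampleMean n y)^2)} := by
    intro y hy
    simp only [Set.mem_setOf_eq] at hy ⊢
    apply ENNReal.ofReal_le_ofReal
    nlinarith
  have hmeas : AEMeasurable (fun y : Fin n → ℝ => ENNReal.ofReal ((sampleMean n y)^2))
      (gaussP n 0) :=
    (((meas_sampleMean n).pow_const 2).ennreal_ofReal).aemeasurable
  have hmark := meas_ge_le_lintegral_div hmeas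
    (ε := ENNReal.ofReal (4*c^2))
    (ne_of_gt (ENNReal.ofReal_pos.mpr (by positivity)))
    ENNReal.ofReal_ne_top
  calc gaussP n 0 {y | sampleMean n y < -(2*c)}
      ≤ gaussP n 0 {y | ENNReal.ofReal (4*c^2) ≤ ENNReal.ofReal ((sampleMean n y)^2)} :=
        measure_mono hsub
    _ ≤ (∫⁻ y, ENNReal.ofReal ((sampleMean n y)^2) ∂(gaussP n 0)) / ENNReal.ofReal (4*c^2) :=
        hmark
    _ = ENNReal.ofReal (1/n) / ENNReal.ofReal (4*c^2) := by rw [lintegral_sampleMean_sq]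
    _ = ENNReal.ofReal ((1/n) / (4*c^2)) := (ENNReal.ofReal_div_of_pos (by positivity)).symm
    _ ≤ ENNReal.ofReal (1/4) := by
        apply ENNReal.ofReal_le_ofReal
        have hkey : (n:ℝ) * c^2 = Real.sqrt n := rpow_key n hn
        have hs1 : (1:ℝ) ≤ Real.sqrt n := by
          rw [show (1:ℝ) = Real.sqrt 1 from (Real.sqrt_one).symm]
          exact Real.sqrt_le_sqrt (by exact_mod_cast hn)
        rw [div_div, show (n:ℝ) * (4*c^2) = 4 * ((n:ℝ) * c^2) by ring, hkey]
        rw [div_le_div_iff₀ (by positivity) (by norm_num)]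
        nlinarith

lemma main_lb (n : ℕ) (hn : 1 ≤ n) :
    ENNReal.ofReal (Real.sqrt n / 4) ≤ ⨆ θ : ℝ,
        ∫⁻ y, ENNReal.ofReal ((n : ℝ) * (hodges n y - θ) ^ 2) ∂(gaussP n θ) := by
  set c : ℝ := (n:ℝ) ^ (-(1/4 : ℝ)) with hc
  set S : Set (Fin n → ℝ) := {y | sampleMean n y ≤ c} with hS
  set B : Set (Fin n → ℝ) := {y | sampleMean n y < -c} with hB
  set A : Set (Fin n → ℝ) := {y | |sampleMean n y| ≤ c} with hA
  have hAm : MeasurableSet A := measurableSet_le (meas_sampleMean n).abs measurable_const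
  have hhalf : ENNReal.ofReal (1/2) = (2:ℝ≥0∞)⁻¹ := by
    rw [ENNReal.ofReal_div_of_pos (by norm_num)]
    simp
  have hq : ENNReal.ofReal (1/4) ≤ gaussP n c A := by
    have hsub : S \ B ⊆ A := by
      intro y hy
      simp only [hS, hB, hA, Set.mem_diff, Set.mem_setOf_eq, not_lt] at hy ⊢
      exact abs_le.mpr ⟨hy.2, hy.1⟩
    have hchain : ENNReal.ofReal (1/4) + ENNReal.ofReal (1/4)
        ≤ gaussP n c (S \ B) + ENNReal.ofReal (1/4) := by
      calc ENNReal.ofReal (1/4) + ENNReal.ofReal (1/4)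
          = ENNReal.ofReal (1/2) := by
            rw [← ENNReal.ofReal_add (by norm_num) (by norm_num)]; norm_num
        _ = (2:ℝ≥0∞)⁻¹ := hhalf
        _ ≤ gaussP n c S := half_le_measure n hn c
        _ ≤ gaussP n c (S \ B ∪ B) := measure_mono (by
            intro y hy
            by_cases hB' : y ∈ B
            · exact Or.inr hB'
            · exact Or.inl ⟨hy, hB'⟩)
        _ ≤ gaussP n c (S \ B) + gaussP n c B := measure_union_le _ _
        _ ≤ gaussP n c (S \ B) + ENNReal.ofReal (1/4) :=
            add_le_add_right (tail_le n hn) _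
    have := (ENNReal.add_le_add_iff_right ENNReal.ofReal_ne_top).mp hchain
    exact this.trans (measure_mono hsub)
  have hkey : (n:ℝ) * c^2 = Real.sqrt n := rpow_key n hn
  calc ENNReal.ofReal (Real.sqrt n / 4)
      = ENNReal.ofReal (Real.sqrt n) * ENNReal.ofReal (1/4) := by
        rw [← ENNReal.ofReal_mul (Real.sqrt_nonneg _), mul_one_div]
    _ ≤ ENNReal.ofReal (Real.sqrt n) * gaussP n c A := mul_le_mul_right hq _
    _ = ∫⁻ _ in A, ENNReal.ofReal (Real.sqrt n) ∂(gaussP n c) := by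
        rw [setLIntegral_const]
    _ ≤ ∫⁻ y in A, ENNReal.ofReal ((n : ℝ) * (hodges n y - c) ^ 2) ∂(gaussP n c) := by
        refine setLIntegral_mono' hAm (fun y hy => le_of_eq ?_)
        simp only [hA, Set.mem_setOf_eq] at hy
        rw [hodges, if_neg (not_lt.mpr hy)]
        congr 1
        rw [← hkey]
        ring
    _ ≤ ∫⁻ y, ENNReal.ofReal ((n : ℝ) * (hodges n y - c) ^ 2) ∂(gaussP n c) :=
        setLIntegral_le_lintegral _ _
    _ ≤ ⨆ θ : ℝ, ∫⁻ y, ENNReal.ofReal ((n : ℝ) * (hodges n y - θ) ^ 2) ∂(gaussP n θ) :=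
        le_iSup (fun θ : ℝ => ∫⁻ y,
          ENNReal.ofReal ((n : ℝ) * (hodges n y - θ) ^ 2) ∂(gaussP n θ)) c

theorem stmt_7 :
    Tendsto (fun n : ℕ => ⨆ θ : ℝ,
        ∫⁻ y, ENNReal.ofReal ((n : ℝ) * (hodges n y - θ) ^ 2) ∂(gaussP n θ))
      atTop (𝓝 ⊤) := by
  rw [ENNReal.tendsto_nhds_top_iff_nnreal]
  intro x
  have hev : ∀ᶠ n : ℕ in atTop, (4 * ((x:ℝ) + 1))^2 ≤ (n:ℝ) := by
    filter_upwards [eventually_ge_atTop ⌈(4 * ((x:ℝ) + 1))^2⌉₊] with n hn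
    calc (4 * ((x:ℝ) + 1))^2 ≤ ⌈(4 * ((x:ℝ) + 1))^2⌉₊ := Nat.le_ceil _
      _ ≤ (n:ℝ) := by exact_mod_cast hn
  filter_upwards [hev, eventually_ge_atTop 1] with n hn1 hn2
  have hx4 : (0:ℝ) ≤ 4 * ((x:ℝ) + 1) := by positivity
  have hsq : 4 * ((x:ℝ) + 1) ≤ Real.sqrt n := by
    rw [show (4 * ((x:ℝ) + 1)) = Real.sqrt ((4 * ((x:ℝ)+1))^2) from
      (Real.sqrt_sq hx4).symm]
    exact Real.sqrt_le_sqrt hn1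
  have hlt : (x : ℝ≥0∞) < ENNReal.ofReal (Real.sqrt n / 4) := by
    calc (x : ℝ≥0∞) = ENNReal.ofReal (x : ℝ) := (ENNReal.ofReal_coe_nnreal).symm
      _ < ENNReal.ofReal (Real.sqrt n / 4) := by
          rw [ENNReal.ofReal_lt_ofReal_iff (by positivity)]
          nlinarith [x.coe_nonneg]
  exact hlt.trans_le (main_lb n hn2)
end

section
/- In the Gaussian location model, if θ̂_n satisfies P_{n,0}(θ̂_n = 0) → 1, then even the local maximal risk diverges: for any positive sequence ρ_n with √n·ρ_n → ∞, sup_{|θ| < ρ_n} E_{n,θ}[n(θ̂_n − θ)²] → ∞ as n → ∞. -/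
open MeasureTheory ProbabilityTheory Filter Topology
open scoped ENNReal

namespace Stmt10Aux

instance (n : ℕ) (θ : ℝ) : IsProbabilityMeasure (gaussP n θ) := by
  unfold gaussP; infer_instance

lemma lintegral_pi_prod_ofReal {n : ℕ} (g : Fin n → ℝ → ℝ) (hg : ∀ i, Integrable (g i))
    (hg0 : ∀ i x, 0 ≤ g i x) :
    ∫⁻ y : Fin n → ℝ, ∏ i, ENNReal.ofReal (g i (y i))
      = ∏ i, ∫⁻ x, ENNReal.ofReal (g i x) := by
  have h1 : ∀ y : Fin n → ℝ, ∏ i, ENNReal.ofReal (g i (y i))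
      = ENNReal.ofReal (∏ i, g i (y i)) := fun y =>
    (ENNReal.ofReal_prod_of_nonneg (fun i _ => hg0 i (y i))).symm
  simp_rw [h1]
  rw [volume_pi]
  rw [← ofReal_integral_eq_lintegral_ofReal (Integrable.fin_nat_prod hg)
    (ae_of_all _ fun y => Finset.prod_nonneg fun i _ => hg0 i (y i)),
    integral_fintype_prod_eq_prod g,
    ENNReal.ofReal_prod_of_nonneg (fun i _ => integral_nonneg (hg0 i))]
  exact Finset.prod_congr rfl fun i _ =>
    ofReal_integral_eq_lintegral_ofReal (hg i) (ae_of_all _ (hg0 i))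

lemma gaussP_eq_withDensity (n : ℕ) (θ : ℝ) :
    gaussP n θ = (volume : Measure (Fin n → ℝ)).withDensity
      (fun y => ∏ i, ENNReal.ofReal (gaussianPDFReal θ 1 (y i))) := by
  rw [gaussP]
  refine Measure.pi_eq fun s hs => ?_
  rw [withDensity_apply _ (MeasurableSet.univ_pi hs)]
  have hind : ∀ y : Fin n → ℝ,
      (Set.pi Set.univ s).indicator
        (fun y : Fin n → ℝ => ∏ i, ENNReal.ofReal (gaussianPDFReal θ 1 (y i))) y
      = ∏ i, ENNReal.ofReal ((s i).indicator (gaussianPDFReal θ 1) (y i)) := by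
    intro y
    by_cases hy : y ∈ Set.pi Set.univ s
    · rw [Set.indicator_of_mem hy]
      refine Finset.prod_congr rfl fun i _ => ?_
      rw [Set.indicator_of_mem (hy i (Set.mem_univ i))]
    · rw [Set.indicator_of_notMem hy]
      rw [Set.mem_univ_pi] at hy
      obtain ⟨i, hi⟩ := not_forall.mp hy
      refine (Finset.prod_eq_zero (Finset.mem_univ i) ?_).symm
      rw [Set.indicator_of_notMem hi, ENNReal.ofReal_zero]
  rw [← lintegral_indicator (MeasurableSet.univ_pi hs)]
  simp_rw [hind]
  rw [lintegral_pi_prod_ofReal _ (fun i => (integrable_gaussianPDFReal θ 1).indicator (hs i))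
      (fun i x => Set.indicator_nonneg (fun x _ => gaussianPDFReal_nonneg θ 1 x) x)]
  refine Finset.prod_congr rfl fun i _ => ?_
  rw [gaussianReal_apply θ one_ne_zero (s i), ← lintegral_indicator (hs i)]
  congr 1
  ext x
  rw [gaussianPDF_def]
  by_cases hx : x ∈ s i
  · rw [Set.indicator_of_mem hx, Set.indicator_of_mem hx]
  · rw [Set.indicator_of_notMem hx, Set.indicator_of_notMem hx, ENNReal.ofReal_zero]

lemma pdf_ratio (θ x : ℝ) :
    gaussianPDFReal θ 1 x = Real.exp (θ * x - θ ^ 2 / 2) * gaussianPDFReal 0 1 x := by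
  simp only [gaussianPDFReal, NNReal.coe_one, mul_one, sub_zero]
  rw [show (-(x - θ) ^ 2 / 2 : ℝ) = (θ * x - θ ^ 2 / 2) + -x ^ 2 / 2 by ring,
    Real.exp_add]
  ring

lemma prod_pdf_eq (n : ℕ) (θ : ℝ) (y : Fin n → ℝ) :
    ∏ i, gaussianPDFReal θ 1 (y i)
      = Real.exp (θ * ∑ i, y i - n * θ ^ 2 / 2) * ∏ i, gaussianPDFReal 0 1 (y i) := by
  have : ∀ i : Fin n, gaussianPDFReal θ 1 (y i)
      = Real.exp (θ * y i - θ ^ 2 / 2) * gaussianPDFReal 0 1 (y i) := fun i => pdf_ratio θ (y i)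
  rw [Finset.prod_congr rfl fun i _ => this i, Finset.prod_mul_distrib, ← Real.exp_sum]
  congr 2
  rw [Finset.sum_sub_distrib, ← Finset.mul_sum, Finset.sum_const, Finset.card_univ,
    Fintype.card_fin, nsmul_eq_mul]
  ring

/-- likelihood ratio density of `gaussP n θ` w.r.t. `gaussP n 0`. -/
noncomputable def LR (n : ℕ) (θ : ℝ) (y : Fin n → ℝ) : ℝ≥0∞ :=
  ENNReal.ofReal (Real.exp (θ * ∑ i, y i - n * θ ^ 2 / 2))

lemma measurable_LR (n : ℕ) (θ : ℝ) : Measurable (LR n θ) := by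
  apply Measurable.ennreal_ofReal
  apply Real.measurable_exp.comp
  apply Measurable.sub _ measurable_const
  exact (Finset.measurable_sum _ fun i _ => measurable_pi_apply i).const_mul θ

lemma measurable_prodpdf (n : ℕ) (θ : ℝ) :
    Measurable (fun y : Fin n → ℝ => ∏ i, ENNReal.ofReal (gaussianPDFReal θ 1 (y i))) :=
  Finset.measurable_prod _ fun i _ =>
    ((measurable_gaussianPDFReal θ 1).comp (measurable_pi_apply i)).ennreal_ofReal

lemma gaussP_eq (n : ℕ) (θ : ℝ) :
    gaussP n θ = (gaussP n 0).withDensity (LR n θ) := by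
  rw [gaussP_eq_withDensity n θ, gaussP_eq_withDensity n 0,
    ← withDensity_mul _ (measurable_prodpdf n 0) (measurable_LR n θ)]
  congr 1
  ext y
  simp only [Pi.mul_apply, LR]
  rw [← ENNReal.ofReal_prod_of_nonneg (fun i _ => gaussianPDFReal_nonneg θ 1 (y i)),
    ← ENNReal.ofReal_prod_of_nonneg (fun i _ => gaussianPDFReal_nonneg 0 1 (y i)),
    ← ENNReal.ofReal_mul (Finset.prod_nonneg fun i _ => gaussianPDFReal_nonneg 0 1 (y i)),
    prod_pdf_eq n θ y, mul_comm]

lemma sqrt_ofReal_sq {x : ℝ} (hx : 0 ≤ x) :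
    (ENNReal.ofReal (x ^ 2)) ^ (1 / 2 : ℝ) = ENNReal.ofReal x := by
  rw [ENNReal.ofReal_pow hx, ← ENNReal.rpow_natCast (ENNReal.ofReal x) 2,
    ← ENNReal.rpow_mul]
  norm_num

lemma lintegral_LR_sq (n : ℕ) (θ : ℝ) :
    ∫⁻ y, LR n θ y ^ 2 ∂(gaussP n 0) = ENNReal.ofReal (Real.exp (n * θ ^ 2)) := by
  rw [gaussP_eq_withDensity n 0,
    lintegral_withDensity_eq_lintegral_mul _ (measurable_prodpdf n 0)
      ((measurable_LR n θ).pow_const 2)]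
  have hpt : ∀ y : Fin n → ℝ,
      ((fun y : Fin n → ℝ => ∏ i, ENNReal.ofReal (gaussianPDFReal 0 1 (y i)))
        * fun y : Fin n → ℝ => LR n θ y ^ 2) y
      = ENNReal.ofReal (Real.exp (n * θ ^ 2))
        * ∏ i, ENNReal.ofReal (gaussianPDFReal (2 * θ) 1 (y i)) := by
    intro y
    simp only [Pi.mul_apply, LR]
    rw [← ENNReal.ofReal_prod_of_nonneg (fun i _ => gaussianPDFReal_nonneg 0 1 (y i)),
      ← ENNReal.ofReal_prod_of_nonneg (fun i _ => gaussianPDFReal_nonneg (2*θ) 1 (y i)),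
      ← ENNReal.ofReal_pow (Real.exp_nonneg _),
      ← ENNReal.ofReal_mul (Finset.prod_nonneg fun i _ => gaussianPDFReal_nonneg 0 1 (y i)),
      ← ENNReal.ofReal_mul (Real.exp_nonneg _)]
    congr 1
    rw [prod_pdf_eq n (2 * θ) y, ← Real.exp_nat_mul, ← mul_assoc, ← Real.exp_add]
    ring_nf
  simp_rw [hpt]
  rw [lintegral_const_mul _ (measurable_prodpdf n (2 * θ))]
  have : ∫⁻ y : Fin n → ℝ, ∏ i, ENNReal.ofReal (gaussianPDFReal (2 * θ) 1 (y i))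
      = gaussP n (2 * θ) Set.univ := by
    rw [gaussP_eq_withDensity n (2 * θ), withDensity_apply _ MeasurableSet.univ,
      setLIntegral_univ]
  rw [this, measure_univ, mul_one]

end Stmt10Aux

open Stmt10Aux in
theorem stmt_10
    (est : (n : ℕ) → (Fin n → ℝ) → ℝ)
    (hmeas : ∀ n, Measurable (est n))
    (hsparse : Tendsto (fun n => gaussP n 0 {y | est n y = 0}) atTop (𝓝 1))
    (ρ : ℕ → ℝ) (hρpos : ∀ n, 0 < ρ n)
    (hρ : Tendsto (fun n : ℕ => Real.sqrt n * ρ n) atTop atTop) :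
    Tendsto (fun n : ℕ => ⨆ θ : ℝ, ⨆ _ : |θ| < ρ n,
        ∫⁻ y, ENNReal.ofReal ((n : ℝ) * (est n y - θ) ^ 2) ∂(gaussP n θ))
      atTop (𝓝 ⊤) := by
  rw [ENNReal.tendsto_nhds_top_iff_nat]
  intro N
  set s : ℝ := Real.sqrt (2 * N + 2) with hs_def
  have hs2 : s ^ 2 = 2 * N + 2 := Real.sq_sqrt (by positivity)
  have hs_pos : 0 < s := Real.sqrt_pos.2 (by positivity)
  set δ : ℝ≥0∞ := ENNReal.ofReal ((Real.exp (-(s ^ 2) / 2) / 2) ^ 2) with hδ_def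
  have hδpos : δ ≠ 0 := by
    simp only [hδ_def, ne_eq, ENNReal.ofReal_eq_zero, not_le]
    positivity
  have h1 : ∀ᶠ n : ℕ in atTop, s < Real.sqrt n * ρ n := hρ.eventually_gt_atTop s
  have h2 : ∀ᶠ n in atTop, 1 - δ < gaussP n 0 {y | est n y = 0} :=
    hsparse.eventually (eventually_gt_nhds
      (ENNReal.sub_lt_self ENNReal.one_ne_top one_ne_zero hδpos))
  filter_upwards [h1, h2, eventually_ge_atTop 1] with n hn1 hn2 hn3
  have hsqrt : (0 : ℝ) < Real.sqrt n := Real.sqrt_pos.2 (by exact_mod_cast hn3)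
  set θ : ℝ := s / Real.sqrt n with hθ_def
  have hθpos : 0 < θ := div_pos hs_pos hsqrt
  have habs : |θ| < ρ n := by
    rw [abs_of_pos hθpos, hθ_def, div_lt_iff₀ hsqrt, mul_comm]
    exact hn1
  have hnθ : (n : ℝ) * θ ^ 2 = s ^ 2 := by
    rw [hθ_def, div_pow, Real.sq_sqrt (Nat.cast_nonneg n)]
    field_simp
  set A : Set (Fin n → ℝ) := {y | est n y = 0} with hA_def
  have hA : MeasurableSet A := hmeas n (measurableSet_singleton 0)
  -- bound on P_θ(Aᶜ)
  have hP0c : gaussP n 0 Aᶜ ≤ δ := by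
    have := measure_compl hA (measure_ne_top (gaussP n 0) A)
    rw [measure_univ] at this
    rw [this]
    calc 1 - gaussP n 0 A ≤ 1 - (1 - δ) := tsub_le_tsub_left hn2.le 1
    _ ≤ δ := by
        rw [tsub_le_iff_right]
        exact le_add_tsub
  have hPθc : gaussP n θ Aᶜ ≤ ENNReal.ofReal (1 / 2) := by
    have hw : gaussP n θ Aᶜ = ∫⁻ y, LR n θ y * Aᶜ.indicator (fun _ => 1) y ∂(gaussP n 0) := by
      rw [gaussP_eq n θ, withDensity_apply _ hA.compl, ← lintegral_indicator hA.compl]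
      congr 1
      ext y
      by_cases hy : y ∈ Aᶜ
      · rw [Set.indicator_of_mem hy, Set.indicator_of_mem hy, mul_one]
      · rw [Set.indicator_of_notMem hy, Set.indicator_of_notMem hy, mul_zero]
    have hCS := ENNReal.lintegral_mul_le_Lp_mul_Lq (gaussP n 0)
      (show Real.HolderConjugate 2 2 from Real.HolderConjugate.two_two)
      (measurable_LR n θ).aemeasurable
      ((measurable_one.indicator hA.compl).aemeasurable :
        AEMeasurable (Aᶜ.indicator (fun _ => (1 : ℝ≥0∞))) (gaussP n 0))
    rw [hw]
    refine le_trans hCS ?_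
    have hsq : ∀ x : ℝ≥0∞, x ^ (2 : ℝ) = x ^ 2 := fun x => by
      rw [← ENNReal.rpow_natCast x 2]; norm_num
    have hLhs : (∫⁻ y, LR n θ y ^ (2 : ℝ) ∂(gaussP n 0)) ^ (1 / (2 : ℝ))
        = ENNReal.ofReal (Real.exp (s ^ 2 / 2)) := by
      have hexp : Real.exp (s ^ 2) = Real.exp (s ^ 2 / 2) ^ 2 := by
        rw [← Real.exp_nat_mul]; congr 1; push_cast; ring
      simp_rw [hsq]
      rw [lintegral_LR_sq n θ, hnθ, hexp, sqrt_ofReal_sq (Real.exp_nonneg _)]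
    have hRhs : (∫⁻ y, Aᶜ.indicator (fun _ => (1:ℝ≥0∞)) y ^ (2:ℝ) ∂(gaussP n 0)) ^ (1 / (2:ℝ))
        ≤ ENNReal.ofReal (Real.exp (-(s ^ 2) / 2) / 2) := by
      have hind : ∀ y, Aᶜ.indicator (fun _ => (1:ℝ≥0∞)) y ^ (2:ℝ)
          = Aᶜ.indicator (fun _ => (1:ℝ≥0∞)) y := by
        intro y
        by_cases hy : y ∈ Aᶜ
        · rw [Set.indicator_of_mem hy, ENNReal.one_rpow]
        · rw [Set.indicator_of_notMem hy, ENNReal.zero_rpow_of_pos (by norm_num)]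
      simp_rw [hind]
      rw [lintegral_indicator hA.compl, setLIntegral_one]
      calc gaussP n 0 Aᶜ ^ (1 / (2:ℝ)) ≤ δ ^ (1 / (2:ℝ)) := by
            exact ENNReal.rpow_le_rpow hP0c (by norm_num)
      _ = ENNReal.ofReal (Real.exp (-(s ^ 2) / 2) / 2) := by
          rw [hδ_def, sqrt_ofReal_sq (by positivity)]
    calc _ ≤ ENNReal.ofReal (Real.exp (s ^ 2 / 2))
          * ENNReal.ofReal (Real.exp (-(s ^ 2) / 2) / 2) := by
          rw [← hLhs]
          exact mul_le_mul_right hRhs _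
    _ = ENNReal.ofReal (1 / 2) := by
        rw [← ENNReal.ofReal_mul (Real.exp_nonneg _)]
        congr 1
        rw [← mul_div_assoc, ← Real.exp_add,
          show s ^ 2 / 2 + -(s ^ 2) / 2 = 0 by ring, Real.exp_zero]
  have hPθ : 1 - ENNReal.ofReal (1 / 2) ≤ gaussP n θ A := by
    have := measure_compl hA (measure_ne_top (gaussP n θ) A)
    rw [measure_univ] at this
    have h' : gaussP n θ A = 1 - gaussP n θ Aᶜ := by
      rw [this, ENNReal.sub_sub_cancel ENNReal.one_ne_top prob_le_one]
    rw [h']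
    exact tsub_le_tsub_left hPθc 1
  -- final chain
  have hhalf : (1 : ℝ≥0∞) - ENNReal.ofReal (1 / 2) = ENNReal.ofReal (1 / 2) := by
    rw [← ENNReal.ofReal_one, ← ENNReal.ofReal_sub _ (by norm_num)]
    norm_num
  have hrisk : ENNReal.ofReal ((N : ℝ) + 1)
      ≤ ∫⁻ y, ENNReal.ofReal ((n : ℝ) * (est n y - θ) ^ 2) ∂(gaussP n θ) := by
    have hstep1 : ∫⁻ y in A, ENNReal.ofReal ((n : ℝ) * (est n y - θ) ^ 2) ∂(gaussP n θ)
        ≤ ∫⁻ y, ENNReal.ofReal ((n : ℝ) * (est n y - θ) ^ 2) ∂(gaussP n θ) :=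
      setLIntegral_le_lintegral _ _
    have hstep2 : ∫⁻ y in A, ENNReal.ofReal ((n : ℝ) * (est n y - θ) ^ 2) ∂(gaussP n θ)
        = ENNReal.ofReal (s ^ 2) * gaussP n θ A := by
      rw [setLIntegral_congr_fun hA (fun y (hy : est n y = 0) => by
        rw [hy, zero_sub, neg_sq, hnθ])]
      rw [setLIntegral_const]
    refine le_trans ?_ hstep1
    rw [hstep2]
    calc ENNReal.ofReal ((N : ℝ) + 1)
        = ENNReal.ofReal (s ^ 2) * ENNReal.ofReal (1 / 2) := by
          rw [← ENNReal.ofReal_mul (by positivity), hs2]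
          congr 1
          ring
    _ = ENNReal.ofReal (s ^ 2) * (1 - ENNReal.ofReal (1 / 2)) := by rw [hhalf]
    _ ≤ ENNReal.ofReal (s ^ 2) * gaussP n θ A := mul_le_mul_right hPθ _
  have hfin : (N : ℝ≥0∞) < ENNReal.ofReal ((N : ℝ) + 1) := by
    rw [← ENNReal.ofReal_natCast N]
    exact ENNReal.ofReal_lt_ofReal_iff (by positivity) |>.2 (by linarith)
  refine lt_of_lt_of_le (lt_of_lt_of_le hfin hrisk) ?_
  exact le_iSup₂ (f := fun θ' (_ : |θ'| < ρ n) =>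
    ∫⁻ y, ENNReal.ofReal ((n : ℝ) * (est n y - θ') ^ 2) ∂(gaussP n θ')) θ habs
end
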